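/- Let w ∈ ℤ, m ∈ ℂ, and let φ : ℍ × ℂ → ℂ and E : ℍ → ℂ be functions such that for a fixed matrix [[a,b],[c,d]] ∈ SL(2,ℤ): (i) φ((aτ+b)/(cτ+d), z/(cτ+d)) = (cτ+d)^w · e^{2πim·cz²/(cτ+d)} · φ(τ,z) for all τ ∈ ℍ, z ∈ ℂ, and (ii) E((aτ+b)/(cτ+d)) = (cτ+d)²E(τ) + (6/(πi))·c(cτ+d). Then the function φ̃(τ,z) = e^{(m/3)π²E(τ)z²} · φ(τ,z) satisfies φ̃((aτ+b)/(cτ+d), z/(cτ+d)) = (cτ+d)^w · φ̃(τ,z), i.e. the index-m automorphy factor is cancelled by the quasimodular anomaly of E. -/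

import Mathlib

open Complex Real

lemma aux18 (m Eτ z u cc : ℂ) (hu : u ≠ 0) (hπ : (π : ℂ) ≠ 0) :
    (m / 3) * (π : ℂ) ^ 2 * (u ^ 2 * Eτ + (6 / (π * I)) * cc * u) * (z / u) ^ 2
      + 2 * π * I * m * cc * z ^ 2 / u
      = (m / 3) * (π : ℂ) ^ 2 * Eτ * z ^ 2 := by
  have hI : (I : ℂ) ≠ 0 := I_ne_zero
  field_simp
  linear_combination (6 * m * z^2 * cc) * Complex.I_sq

/-- If `φ` transforms as a Jacobi-like form of weight `w` and index `m` under a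
fixed element of `SL(2,ℤ)`, and `E` has the quasimodular anomaly of `E₂`, then
`φ̃(τ,z) = e^{(m/3)π²E(τ)z²} φ(τ,z)` transforms with weight `w` and vanishing
index: the index-`m` automorphy factor is cancelled. -/
theorem stmt_18 (w : ℤ) (m : ℂ) (φ : ℂ → ℂ → ℂ) (E : ℂ → ℂ)
    (a b c d : ℤ) (hdet : a * d - b * c = 1)
    (hφ : ∀ τ : ℂ, 0 < τ.im → ∀ z : ℂ,
      φ (((a : ℂ) * τ + b) / ((c : ℂ) * τ + d)) (z / ((c : ℂ) * τ + d))
        = ((c : ℂ) * τ + d) ^ w *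
          Complex.exp (2 * π * I * m * (c : ℂ) * z ^ 2 / ((c : ℂ) * τ + d)) *
          φ τ z)
    (hE : ∀ τ : ℂ, 0 < τ.im →
      E (((a : ℂ) * τ + b) / ((c : ℂ) * τ + d))
        = ((c : ℂ) * τ + d) ^ 2 * E τ + (6 / (π * I)) * (c : ℂ) * ((c : ℂ) * τ + d)) :
    ∀ τ : ℂ, 0 < τ.im → ∀ z : ℂ,
      Complex.exp ((m / 3) * (π : ℂ) ^ 2 *
            E (((a : ℂ) * τ + b) / ((c : ℂ) * τ + d)) * (z / ((c : ℂ) * τ + d)) ^ 2) *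
          φ (((a : ℂ) * τ + b) / ((c : ℂ) * τ + d)) (z / ((c : ℂ) * τ + d))
        = ((c : ℂ) * τ + d) ^ w *
          (Complex.exp ((m / 3) * (π : ℂ) ^ 2 * E τ * z ^ 2) * φ τ z) := by
  intro τ hτ z
  have h0 : ((c : ℂ) * τ + d) ≠ 0 := by
    intro h
    rcases eq_or_ne (c : ℂ) 0 with hc | hc
    · have hc0 : c = 0 := by exact_mod_cast hc
      have hd : (d : ℂ) = 0 := by simpa [hc] using h
      have hd0 : d = 0 := by exact_mod_cast hd
      simp [hc0, hd0] at hdet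
    · have him : ((c : ℂ) * τ + d).im = (c : ℝ) * τ.im := by
        simp [Complex.add_im, Complex.mul_im]
      rw [h] at him
      rcases mul_eq_zero.mp him.symm with h1 | h2
      · exact hc (by exact_mod_cast h1)
      · exact hτ.ne' h2
  have hI : (I : ℂ) ≠ 0 := I_ne_zero
  have hπ : (π : ℂ) ≠ 0 := by exact_mod_cast Real.pi_ne_zero
  set u : ℂ := (c : ℂ) * τ + d with hu
  have key := aux18 m (E τ) z u (c : ℂ) h0 hπ
  rw [hE τ hτ, hφ τ hτ z]
  calc Complex.exp ((m / 3) * (π : ℂ) ^ 2 *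
        (u ^ 2 * E τ + (6 / (π * I)) * (c : ℂ) * u) * (z / u) ^ 2) *
      (u ^ w * Complex.exp (2 * π * I * m * (c : ℂ) * z ^ 2 / u) * φ τ z)
      = u ^ w *
        (Complex.exp ((m / 3) * (π : ℂ) ^ 2 *
          (u ^ 2 * E τ + (6 / (π * I)) * (c : ℂ) * u) * (z / u) ^ 2
          + 2 * π * I * m * (c : ℂ) * z ^ 2 / u) * φ τ z) := by
        rw [Complex.exp_add]; ring
    _ = u ^ w *
        (Complex.exp ((m / 3) * (π : ℂ) ^ 2 * E τ * z ^ 2) * φ τ z) := by rw [key]
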